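/- Let t be a real number with t < 0 and let F(x) = 1/(e^{x(t-1)} - t) for x ∈ ℝ. Suppose that for some N ∈ ℕ and real coefficients b_0, b_1, …, b_N the identity (d/dx)^N F(x) = (1-t)^N · Σ_{i=1}^{N+1} b_{i-1} · F(x)^i holds for all real x. Then the (N+1)-st derivative of F satisfies, for all real x, (d/dx)^{N+1} F(x) = (1-t)^{N+1} · [ b_0·F(x) + (N+1)·t·b_N·F(x)^{N+2} + Σ_{i=2}^{N+1} ( i·b_{i-1} + (i-1)·t·b_{i-2} )·F(x)^i ]. -/

import Mathlib

lemma eulerian_key (t u : ℝ) (b : ℕ → ℝ) (N : ℕ) :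
    (∑ i ∈ Finset.Icc 1 (N + 1),
      b (i - 1) * ((i : ℝ) * u ^ (i - 1) * ((1 - t) * (u + t * u ^ 2)))) =
    (1 - t) * (b 0 * u + ((N : ℝ) + 1) * t * b N * u ^ (N + 2) +
      ∑ i ∈ Finset.Icc 2 (N + 1),
        ((i : ℝ) * b (i - 1) + ((i : ℝ) - 1) * t * b (i - 2)) * u ^ i) := by
  induction N with
  | zero => simp; ring
  | succ n ih =>
    rw [Finset.sum_Icc_succ_top (by omega : 1 ≤ n + 1 + 1),
        Finset.sum_Icc_succ_top (by omega : 2 ≤ n + 1 + 1), ih]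
    simp only [Nat.add_sub_cancel, show n + 1 + 1 - 2 = n from rfl]
    push_cast
    ring

theorem eulerian_deriv_step (t : ℝ) (ht : t < 0)
    (F : ℝ → ℝ) (hF : F = fun x => 1 / (Real.exp (x * (t - 1)) - t))
    (N : ℕ) (b : ℕ → ℝ)
    (h : ∀ x : ℝ, iteratedDeriv N F x =
      (1 - t) ^ N * ∑ i ∈ Finset.Icc 1 (N + 1), b (i - 1) * (F x) ^ i) :
    ∀ x : ℝ, iteratedDeriv (N + 1) F x =
      (1 - t) ^ (N + 1) *
        (b 0 * F x + ((N : ℝ) + 1) * t * b N * (F x) ^ (N + 2) +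
          ∑ i ∈ Finset.Icc 2 (N + 1),
            ((i : ℝ) * b (i - 1) + ((i : ℝ) - 1) * t * b (i - 2)) * (F x) ^ i) := by
  have hexp : ∀ y : ℝ, Real.exp (y * (t - 1)) - t ≠ 0 := by
    intro y
    have := Real.exp_pos (y * (t - 1))
    intro hc; linarith
  have hF' : ∀ y : ℝ, HasDerivAt F ((1 - t) * (F y + t * (F y) ^ 2)) y := by
    intro y
    have h1 : HasDerivAt (fun z : ℝ => z * (t - 1)) (t - 1) y := by
      simpa using (hasDerivAt_id y).mul_const (t - 1)
    have hg : HasDerivAt (fun z => Real.exp (z * (t - 1)) - t)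
        (Real.exp (y * (t - 1)) * (t - 1)) y := by
      simpa using (h1.exp).sub_const t
    have hinv : HasDerivAt (fun z => (Real.exp (z * (t - 1)) - t)⁻¹) _ y := hg.inv (hexp y)
    rw [hF]
    simp only [one_div]
    convert hinv using 1
    have hne := hexp y
    field_simp
    ring
  intro x
  rw [iteratedDeriv_succ]
  have hEq : iteratedDeriv N F =
      fun y => (1 - t) ^ N * ∑ i ∈ Finset.Icc 1 (N + 1), b (i - 1) * (F y) ^ i :=
    funext h
  rw [hEq]
  have hS : HasDerivAt (fun y => ∑ i ∈ Finset.Icc 1 (N + 1), b (i - 1) * (F y) ^ i)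
      (∑ i ∈ Finset.Icc 1 (N + 1),
        b (i - 1) * ((i : ℝ) * (F x) ^ (i - 1) * ((1 - t) * (F x + t * (F x) ^ 2)))) x := by
    apply HasDerivAt.fun_sum
    intro i _
    exact ((hF' x).pow i).const_mul _
  rw [(hS.const_mul ((1 - t) ^ N)).deriv]
  rw [eulerian_key t (F x) b N]
  ring
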